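/- arXiv:1506.01544 — 2 statements merged into one kernel-verified Lean document; each statement's English description precedes it below -/
import Mathlib

section
/- Let (P, Q) be a pair of natural numbers such that for every index i, bit (i+1) of P and bit i of Q are not both 1 (so that (P,Q) is non-contradictory), and suppose P is even with bit 0 of P equal to 0. Let m be the number of indices i such that bit (i+1) of P is 0 and bit i of Q is 1. Then the number of ordered pairs (X, Y) with CVT(X, Y) = P and XOR(X, Y) = Q is exactly 2^m. -/
def CVT (X Y : ℕ) : ℕ := 2 * (X &&& Y)
def XOR (X Y : ℕ) : ℕ := X ^^^ Y

private lemma add_eq_lor : ∀ a b : ℕ, a &&& b = 0 → a + b = a ||| b := by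
  intro a
  induction a using Nat.binaryRec with
  | zero => simp
  | bit c n ih =>
    intro b h
    obtain ⟨d, m, rfl⟩ : ∃ d m, b = Nat.bit d m :=
      ⟨b.testBit 0, b >>> 1, (Nat.bit_testBit_zero_shiftRight_one b).symm⟩
    rw [Nat.land_bit, Nat.bit_eq_zero_iff] at h
    obtain ⟨h1, h2⟩ := h
    rw [Nat.lor_bit, ← ih m h1]
    rw [Nat.bit_val, Nat.bit_val, Nat.bit_val]
    have : c.toNat + d.toNat = (c || d).toNat := by
      cases c <;> cases d <;> simp_all
    omega

private lemma bool_aux (a s q : Bool) (h1 : ¬ (a = true ∧ q = true))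
    (h2 : s = true → q = true) : ((a || s) && ((a || s) ^^ q)) = a := by
  cases a <;> cases s <;> cases q <;> simp_all

private lemma testBit_sum_two_pow (t : Finset ℕ) (j : ℕ) :
    (∑ i ∈ t, 2 ^ i).testBit j = decide (j ∈ t) := by
  induction t using Finset.induction generalizing j with
  | empty => simp
  | @insert a t ha ih =>
    have hd : (2 ^ a) &&& (∑ i ∈ t, 2 ^ i) = 0 := by
      refine Nat.eq_of_testBit_eq fun k => ?_
      simp only [Nat.testBit_and, Nat.zero_testBit, ih, Nat.testBit_two_pow]
      by_cases hk : a = k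
      · subst hk; simp [ih, ha]
      · simp [hk]
    rw [Finset.sum_insert ha, add_eq_lor _ _ hd]
    simp only [Nat.testBit_or, ih, Nat.testBit_two_pow, Finset.mem_insert]
    by_cases hj : a = j
    · subst hj; simp
    · simp [hj, Ne.symm hj]

theorem num_children (P Q : ℕ)
    (hnc : ∀ i, ¬ (Nat.testBit P (i + 1) = true ∧ Nat.testBit Q i = true))
    (hP : Nat.testBit P 0 = false) :
    Set.ncard {p : ℕ × ℕ | CVT p.1 p.2 = P ∧ XOR p.1 p.2 = Q} =
      2 ^ Set.ncard {i : ℕ | Nat.testBit P (i + 1) = false ∧ Nat.testBit Q i = true} := by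
  set A := P / 2 with hAdef
  have hA : ∀ i, A.testBit i = P.testBit (i + 1) := fun i => Nat.testBit_div_two P i
  have hP2 : 2 * A = P := by
    have : P % 2 = 0 := Nat.mod_two_eq_zero_iff_testBit_zero.mpr hP
    omega
  have hAQ : ∀ i, A.testBit i = true → Q.testBit i = false := by
    intro i hi
    by_contra h
    exact hnc i ⟨(hA i) ▸ hi, by simpa using h⟩
  have hQlt : ∀ i, Q.testBit i = true → i < Q := by
    intro i hi
    have h1 : 2 ^ i ≤ Q := Nat.ge_two_pow_of_testBit hi
    have h2 : i < 2 ^ i := Nat.lt_two_pow_self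
    omega
  set F : Finset ℕ := Finset.filter (fun i => Q.testBit i) (Finset.range Q) with hF
  have hmemF : ∀ i, i ∈ F ↔ Q.testBit i = true := by
    intro i
    simp only [hF, Finset.mem_filter, Finset.mem_range]
    exact ⟨fun h => h.2, fun h => ⟨hQlt i h, h⟩⟩
  -- RHS set
  have hrhs : {i : ℕ | Nat.testBit P (i + 1) = false ∧ Nat.testBit Q i = true} = ↑F := by
    ext i
    simp only [Set.mem_setOf_eq, Finset.coe_filter, hmemF, Finset.mem_coe]
    constructor
    · exact fun h => h.2
    · intro h
      refine ⟨?_, h⟩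
      by_contra hc
      exact hnc i ⟨by simpa using hc, h⟩
  -- the map
  set g : Finset ℕ → ℕ × ℕ :=
    fun t => (A ||| ∑ i ∈ t, 2 ^ i, (A ||| ∑ i ∈ t, 2 ^ i) ^^^ Q) with hg
  set G : Finset (ℕ × ℕ) := F.powerset.image g with hG
  have hS : ∀ t ∈ F.powerset, ∀ j, (∑ i ∈ t, 2 ^ i).testBit j = true → Q.testBit j = true := by
    intro t ht j hj
    rw [testBit_sum_two_pow] at hj
    rw [Finset.mem_powerset] at ht
    exact (hmemF j).mp (ht (by simpa using hj))
  have hlhs : {p : ℕ × ℕ | CVT p.1 p.2 = P ∧ XOR p.1 p.2 = Q} = ↑G := by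
    ext ⟨X, Y⟩
    simp only [Set.mem_setOf_eq, CVT, XOR, hG, Finset.coe_image, Set.mem_image,
      Finset.mem_coe, Finset.mem_powerset]
    constructor
    · rintro ⟨hCVT, hXOR⟩
      have hXY : X &&& Y = A := by omega
      have hY : Y = X ^^^ Q := by
        rw [← hXOR, ← Nat.xor_assoc, Nat.xor_self, Nat.zero_xor]
      refine ⟨F.filter (fun i => X.testBit i), Finset.filter_subset _ _, ?_⟩
      have hX : A ||| ∑ i ∈ F.filter (fun i => X.testBit i), 2 ^ i = X := by
        refine Nat.eq_of_testBit_eq fun j => ?_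
        simp only [Nat.testBit_or, testBit_sum_two_pow, Finset.mem_filter, hmemF]
        have ha : A.testBit j = (X.testBit j && Y.testBit j) := by
          rw [← hXY, Nat.testBit_and]
        have hq : Q.testBit j = (X.testBit j ^^ Y.testBit j) := by
          rw [← hXOR, Nat.testBit_xor]
        cases hx : X.testBit j <;> cases hy : Y.testBit j <;>
          simp [ha, hq, hx, hy]
      simp only [hg, hX]
      exact Prod.ext rfl hY.symm
    · rintro ⟨t, ht, hgt⟩
      set S := ∑ i ∈ t, 2 ^ i with hSdef
      have hXeq : X = A ||| S := congrArg Prod.fst hgt.symm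
      have hYeq : Y = (A ||| S) ^^^ Q := congrArg Prod.snd hgt.symm
      have hxor : X ^^^ Y = Q := by
        rw [hXeq, hYeq, ← Nat.xor_assoc, Nat.xor_self, Nat.zero_xor]
      have hand : X &&& Y = A := by
        refine Nat.eq_of_testBit_eq fun j => ?_
        rw [hXeq, hYeq]
        simp only [Nat.testBit_and, Nat.testBit_xor, Nat.testBit_or]
        have h1 : ¬(A.testBit j = true ∧ Q.testBit j = true) := by
          intro ⟨h, h'⟩; rw [hAQ j h] at h'; exact Bool.false_ne_true h'
        have h2 := hS t (Finset.mem_powerset.mpr ht) j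
        exact bool_aux _ _ _ h1 h2
      exact ⟨by rw [hand, hP2], hxor⟩
  rw [hrhs, hlhs, Set.ncard_coe_finset, Set.ncard_coe_finset, hG]
  rw [Finset.card_image_of_injOn, Finset.card_powerset]
  -- injectivity
  intro t1 h1 t2 h2 heq
  simp only [Finset.mem_coe, Finset.mem_powerset] at h1 h2
  have hfst : A ||| ∑ i ∈ t1, 2 ^ i = A ||| ∑ i ∈ t2, 2 ^ i := congrArg Prod.fst heq
  ext j
  have hbit := congrArg (fun n => n.testBit j) hfst
  simp only [Nat.testBit_or, testBit_sum_two_pow] at hbit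
  have key : ∀ t : Finset ℕ, t ⊆ F → j ∈ t → A.testBit j = false := by
    intro t ht hj
    by_contra hc
    have : Q.testBit j = true := (hmemF j).mp (ht hj)
    rw [hAQ j (by simpa using hc)] at this
    exact Bool.false_ne_true this
  constructor
  · intro hj
    have ha := key t1 h1 hj
    rw [ha] at hbit
    simp only [Bool.false_or] at hbit
    have : decide (j ∈ t2) = true := by rw [← hbit]; simp [hj]
    simpa using this
  · intro hj
    have ha := key t2 h2 hj
    rw [ha] at hbit
    simp only [Bool.false_or] at hbit
    have : decide (j ∈ t1) = true := by rw [hbit]; simp [hj]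
    simpa using this
end

section
/- Let N = 2^k - 2 with k ≥ 2. Then for every pair (X, Y) with X + Y = N, the iterate (CVT(X,Y), XOR(X,Y)) either equals (0, N) or has CVT value satisfying CVT(CVT(X,Y), XOR(X,Y)) = 0 after one more step; i.e., every node of the CVT-XOR tree of N reaches the root in at most 2 steps (the tree has height at most 3 counting the (N,0) node). -/
private lemma and_mod_two (x y : ℕ) : (x &&& y) % 2 = (x % 2) * (y % 2) := by
  rcases Nat.mod_two_eq_zero_or_one x with hx | hx <;>
  rcases Nat.mod_two_eq_zero_or_one y with hy | hy <;>
  simp only [hx, hy, Nat.mul_zero, Nat.zero_mul, Nat.mul_one]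
  · rw [Nat.mod_two_eq_zero_iff_testBit_zero] at hx ⊢
    rw [Nat.testBit_and, hx]; rfl
  · rw [Nat.mod_two_eq_zero_iff_testBit_zero] at hx ⊢
    rw [Nat.testBit_and, hx]; rfl
  · rw [Nat.mod_two_eq_zero_iff_testBit_zero] at hy ⊢
    rw [Nat.testBit_and, hy]; simp
  · rw [Nat.mod_two_eq_one_iff_testBit_zero] at hx hy ⊢
    rw [Nat.testBit_and, hx, hy]; rfl

private lemma add_eq_xor_add_two_and (x y : ℕ) : x + y = (x ^^^ y) + 2 * (x &&& y) := by
  induction x using Nat.strong_induction_on generalizing y with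
  | _ x ih =>
    rcases Nat.eq_zero_or_pos x with hx | hx
    · simp [hx]
    have ih2 := ih (x / 2) (Nat.div_lt_self hx one_lt_two) (y / 2)
    have h1 : (x ^^^ y) / 2 = x / 2 ^^^ y / 2 := Nat.xor_div_two
    have h2 : (x &&& y) / 2 = x / 2 &&& y / 2 := Nat.and_div_two
    have h3 : (x ^^^ y) % 2 = (x + y) % 2 := Nat.xor_mod_two_eq
    have h4 : (x &&& y) % 2 = (x % 2) * (y % 2) := and_mod_two x y
    have e1 := Nat.div_add_mod x 2
    have e2 := Nat.div_add_mod y 2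
    have e3 := Nat.div_add_mod (x ^^^ y) 2
    have e4 := Nat.div_add_mod (x &&& y) 2
    rcases Nat.mod_two_eq_zero_or_one x with hx2 | hx2 <;>
    rcases Nat.mod_two_eq_zero_or_one y with hy2 | hy2 <;>
    simp only [hx2, hy2, Nat.zero_mul, Nat.mul_zero, Nat.mul_one] at h4 <;>
    omega

private lemma and_eq_zero_of_add_eq_pred_pow (m : ℕ) :
    ∀ c d : ℕ, c + d = 2 ^ m - 1 → c &&& d = 0 := by
  induction m with
  | zero =>
    intro c d h
    simp only [pow_zero] at h
    obtain ⟨rfl, rfl⟩ : c = 0 ∧ d = 0 := by omega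
    rfl
  | succ m ih =>
    intro c d h
    have hm : 0 < 2 ^ m := Nat.pow_pos (by norm_num)
    have hsum : c + d = 2 * (2 ^ m - 1) + 1 := by
      rw [pow_succ] at h; omega
    have hpar : c % 2 + d % 2 = 1 := by
      have := Nat.div_add_mod c 2; have := Nat.div_add_mod d 2
      rcases Nat.mod_two_eq_zero_or_one c with hc | hc <;>
      rcases Nat.mod_two_eq_zero_or_one d with hd | hd <;> omega
    have hdiv : c / 2 + d / 2 = 2 ^ m - 1 := by
      have := Nat.div_add_mod c 2; have := Nat.div_add_mod d 2; omega
    have h1 : (c &&& d) / 2 = 0 := by rw [Nat.and_div_two]; exact ih _ _ hdiv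
    have h2 : (c &&& d) % 2 = 0 := by
      rw [and_mod_two]
      rcases Nat.mod_two_eq_zero_or_one c with hc | hc <;>
      rcases Nat.mod_two_eq_zero_or_one d with hd | hd <;>
      simp [hc, hd] <;> omega
    omega

theorem height_le_two_steps (k X Y : ℕ) (hk : 2 ≤ k) (hsum : X + Y = 2 ^ k - 2) :
    (fun p : ℕ × ℕ => (CVT p.1 p.2, XOR p.1 p.2))^[2] (X, Y) = (0, 2 ^ k - 2) := by
  have hk2 : 2 ^ k = 2 * 2 ^ (k - 1) := by
    conv_lhs => rw [show k = (k - 1) + 1 by omega]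
    rw [pow_succ]; ring
  have hm : 0 < 2 ^ (k - 1) := Nat.pow_pos (by norm_num)
  set C := 2 * (X &&& Y) with hC
  set D := X ^^^ Y with hD
  have hCD : C + D = 2 ^ k - 2 := by
    have := add_eq_xor_add_two_and X Y; omega
  have hDeven : D % 2 = 0 := by
    have h3 : D % 2 = (X + Y) % 2 := Nat.xor_mod_two_eq
    rw [h3, hsum, hk2]; omega
  have hdiv : C / 2 + D / 2 = 2 ^ (k - 1) - 1 := by
    have := Nat.div_add_mod D 2
    have : C / 2 = X &&& Y := by omega
    omega
  have hand : C &&& D = 0 := by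
    have h1 : (C &&& D) / 2 = 0 := by
      rw [Nat.and_div_two]
      exact and_eq_zero_of_add_eq_pred_pow _ _ _ hdiv
    have h2 : (C &&& D) % 2 = 0 := by
      rw [and_mod_two, hDeven, Nat.mul_zero]
    omega
  have hxor : C ^^^ D = 2 ^ k - 2 := by
    have := add_eq_xor_add_two_and C D; omega
  show (CVT (CVT X Y) (XOR X Y), XOR (CVT X Y) (XOR X Y)) = (0, 2 ^ k - 2)
  simp only [CVT, XOR, ← hC, ← hD, hand, hxor, Nat.mul_zero]
end
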